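/- Let A, B ∈ {0,1,2}^n with ∑a_i + ∑b_i ≡ 1 (mod 3) and suppose that a_i + b_i ≢ 0 (mod 3) for at least two indices i. Then the set C_{2,n} ∩ {S_{A,1} ≤ 2−∑a_i} ∩ {S_{B,2} ≤ 2−∑b_i} has Lebesgue measure zero in ℝ^{2n}. -/

import Mathlib

open MeasureTheory Finset

/-- `u_0=(1,2), u_1=(1,−1), u_2=(−2,−1)`. -/
noncomputable def uVec : Fin 3 → Fin 2 → ℝ := ![![1, 2], ![1, -1], ![-2, -1]]

/-- `w_0=(2,1), w_1=(−1,1), w_2=(−1,−2)`. -/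
noncomputable def wVec : Fin 3 → Fin 2 → ℝ := ![![2, 1], ![-1, 1], ![-1, -2]]

lemma key18 (a b : Fin 3) (x1 x2 : ℝ) (h0 : 0 ≤ x1) (h1 : 0 ≤ x2) (hs : x1 + x2 ≤ 1) :
    ((((a : ℕ) + (b : ℕ)) % 3 : ℕ) : ℝ) ≤
      ((a : ℕ) : ℝ) + ((b : ℕ) : ℝ) + (uVec a 0 * x1 + uVec a 1 * x2)
        + (wVec b 0 * x1 + wVec b 1 * x2) := by
  fin_cases a <;> fin_cases b <;> norm_num [uVec, wVec] <;> linarith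

noncomputable def Lmap18 (n : ℕ) (A : Fin n → Fin 3) :
    (Fin n × Fin 2 → ℝ) →ₗ[ℝ] ℝ where
  toFun x := ∑ j, (uVec (A j) 0 * x (j, 0) + uVec (A j) 1 * x (j, 1))
  map_add' x y := by
    simp only [Pi.add_apply, mul_add]
    rw [← Finset.sum_add_distrib]
    congr 1; ext j; ring
  map_smul' c x := by
    simp only [Pi.smul_apply, smul_eq_mul, RingHom.id_apply, Finset.mul_sum]
    congr 1; ext j; ring

noncomputable def hyper18 (n : ℕ) (A : Fin n → Fin 3) (c : ℝ) :
    AffineSubspace ℝ (Fin n × Fin 2 → ℝ) where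
  carrier := {x | Lmap18 n A x = c}
  smul_vsub_vadd_mem' t p1 p2 p3 h1 h2 h3 := by
    simp only [Set.mem_setOf_eq] at *
    simp [vsub_eq_sub, vadd_eq_add, map_add, _root_.map_smul, map_sub, h1, h2, h3]

/-- If `∑ a_i + ∑ b_i ≡ 1 (mod 3)` and `a_i + b_i ≢ 0 (mod 3)` for at least two
indices, then `C_{2,n} ∩ {S_{A,1} ≤ 2−∑a_i} ∩ {S_{B,2} ≤ 2−∑b_i}` has Lebesgue
measure zero. -/
theorem stmt18 (n : ℕ) (A B : Fin n → Fin 3)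
    (h1 : ((∑ i, ((A i : ℕ))) + ∑ i, ((B i : ℕ))) % 3 = 1)
    (h2 : 2 ≤ (Finset.univ.filter fun i : Fin n =>
      ((A i : ℕ) + (B i : ℕ)) % 3 ≠ 0).card) :
    volume {x : Fin n × Fin 2 → ℝ |
        (∀ p, 0 ≤ x p) ∧ (∀ j, x (j, 0) + x (j, 1) ≤ 1) ∧
        (∑ j, (uVec (A j) 0 * x (j, 0) + uVec (A j) 1 * x (j, 1))
            ≤ 2 - ∑ j, ((A j : ℕ) : ℝ)) ∧
        (∑ j, (wVec (B j) 0 * x (j, 0) + wVec (B j) 1 * x (j, 1))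
            ≤ 2 - ∑ j, ((B j : ℕ) : ℝ))} = 0 := by
  set c : ℝ := 2 - ∑ j, ((A j : ℕ) : ℝ) with hc
  -- the natural-number minorant is at least 4
  have hm : 4 ≤ ∑ j, ((A j : ℕ) + (B j : ℕ)) % 3 := by
    have hmod : (∑ j, ((A j : ℕ) + (B j : ℕ)) % 3) % 3 = 1 := by
      rw [← Finset.sum_nat_mod, Finset.sum_add_distrib, h1]
    have h2' : 2 ≤ ∑ j, ((A j : ℕ) + (B j : ℕ)) % 3 := by
      calc 2 ≤ (Finset.univ.filter fun i : Fin n =>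
            ((A i : ℕ) + (B i : ℕ)) % 3 ≠ 0).card := h2
        _ = ∑ i ∈ Finset.univ.filter (fun i : Fin n =>
            ((A i : ℕ) + (B i : ℕ)) % 3 ≠ 0), 1 := by
            rw [Finset.card_eq_sum_ones]
        _ ≤ ∑ i ∈ Finset.univ.filter (fun i : Fin n =>
            ((A i : ℕ) + (B i : ℕ)) % 3 ≠ 0), ((A i : ℕ) + (B i : ℕ)) % 3 := by
            refine Finset.sum_le_sum fun i hi => ?_
            have := (Finset.mem_filter.mp hi).2
            omega
        _ ≤ ∑ j, ((A j : ℕ) + (B j : ℕ)) % 3 :=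
            Finset.sum_le_sum_of_subset (Finset.filter_subset _ _)
    omega
  -- subset of a hyperplane
  refine measure_mono_null (t := (hyper18 n A c : Set (Fin n × Fin 2 → ℝ))) ?_ ?_
  · rintro x ⟨hpos, hsimp, hA, hB⟩
    have key : ∀ j, ((((A j : ℕ) + (B j : ℕ)) % 3 : ℕ) : ℝ) ≤
        ((A j : ℕ) : ℝ) + ((B j : ℕ) : ℝ)
          + (uVec (A j) 0 * x (j, 0) + uVec (A j) 1 * x (j, 1))
          + (wVec (B j) 0 * x (j, 0) + wVec (B j) 1 * x (j, 1)) := fun j =>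
      key18 (A j) (B j) (x (j, 0)) (x (j, 1)) (hpos _) (hpos _) (hsimp j)
    have hsum : ((∑ j, ((A j : ℕ) + (B j : ℕ)) % 3 : ℕ) : ℝ) ≤
        ∑ j, (((A j : ℕ) : ℝ) + ((B j : ℕ) : ℝ)
          + (uVec (A j) 0 * x (j, 0) + uVec (A j) 1 * x (j, 1))
          + (wVec (B j) 0 * x (j, 0) + wVec (B j) 1 * x (j, 1))) := by
      push_cast
      exact Finset.sum_le_sum fun j _ => key j
    have h4 : (4 : ℝ) ≤ ∑ j, (((A j : ℕ) : ℝ) + ((B j : ℕ) : ℝ)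
          + (uVec (A j) 0 * x (j, 0) + uVec (A j) 1 * x (j, 1))
          + (wVec (B j) 0 * x (j, 0) + wVec (B j) 1 * x (j, 1))) := by
      refine le_trans ?_ hsum
      exact_mod_cast Nat.cast_le.mpr hm
    have hsplit : ∑ j, (((A j : ℕ) : ℝ) + ((B j : ℕ) : ℝ)
          + (uVec (A j) 0 * x (j, 0) + uVec (A j) 1 * x (j, 1))
          + (wVec (B j) 0 * x (j, 0) + wVec (B j) 1 * x (j, 1)))
        = (∑ j, ((A j : ℕ) : ℝ)) + (∑ j, ((B j : ℕ) : ℝ))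
          + (∑ j, (uVec (A j) 0 * x (j, 0) + uVec (A j) 1 * x (j, 1)))
          + (∑ j, (wVec (B j) 0 * x (j, 0) + wVec (B j) 1 * x (j, 1))) := by
      rw [Finset.sum_add_distrib, Finset.sum_add_distrib, Finset.sum_add_distrib]
    show Lmap18 n A x = c
    have : Lmap18 n A x = ∑ j, (uVec (A j) 0 * x (j, 0) + uVec (A j) 1 * x (j, 1)) := rfl
    rw [this, hc]
    rw [hsplit] at h4
    linarith
  · refine Measure.addHaar_affineSubspace _ _ ?_
    intro htop
    -- pick an index
    have hne : (Finset.univ.filter fun i : Fin n =>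
        ((A i : ℕ) + (B i : ℕ)) % 3 ≠ 0).Nonempty :=
      Finset.card_pos.mp (by omega)
    obtain ⟨j0, _⟩ := hne
    have hu0 : uVec (A j0) 0 ≠ 0 := by
      have : ∀ a : Fin 3, uVec a 0 ≠ 0 := by
        intro a; fin_cases a <;> norm_num [uVec]
      exact this _
    set x0 : Fin n × Fin 2 → ℝ := Pi.single (j0, 0) ((c + 1) / uVec (A j0) 0) with hx0
    have hmem : x0 ∈ hyper18 n A c := htop ▸ AffineSubspace.mem_top ℝ _ x0
    have hval : Lmap18 n A x0 = c + 1 := by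
      have : Lmap18 n A x0 = ∑ j, (uVec (A j) 0 * x0 (j, 0) + uVec (A j) 1 * x0 (j, 1)) := rfl
      rw [this, Finset.sum_eq_single j0]
      · rw [hx0, Pi.single_eq_same, Pi.single_eq_of_ne (by simp)]
        field_simp
        ring
      · intro j _ hj
        rw [hx0, Pi.single_eq_of_ne (by simp [hj]), Pi.single_eq_of_ne (by simp [hj])]
        ring
      · intro h; exact absurd (Finset.mem_univ j0) h
    have : Lmap18 n A x0 = c := hmem
    rw [hval] at this
    linarith
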